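/- Let H_g and H_β be symmetric N×N real matrices and let H := [[H_g, H_β],[H_β, −H_g]] be the associated 2N×2N block matrix; assume H is invertible. Let Σ_pp, Σ_qq, Σ_pq be N×N real diagonal matrices such that d_i := Σ_pp(i,i)·Σ_qq(i,i) − Σ_pq(i,i)² ≠ 0 for every i, let D be the diagonal matrix with D(i,i) = d_i, let Σ := [[Σ_pp, Σ_pq],[Σ_pq, Σ_qq]], and let Σ_v := H⁻¹ Σ H⁻¹. Then Σ_v is invertible and Σ_v⁻¹ = [[J_vv, J_vθ],[J_θv, J_θθ]], where J_vv = H_g D⁻¹(Σ_qq H_g − Σ_pq H_β) − H_β D⁻¹(Σ_pq H_g − Σ_pp H_β), J_vθ = H_g D⁻¹(Σ_qq H_β + Σ_pq H_g) − H_β D⁻¹(Σ_pq H_β + Σ_pp H_g), J_θv = H_β D⁻¹(Σ_qq H_g − Σ_pq H_β) + H_g D⁻¹(Σ_pq H_g − Σ_pp H_β), and J_θθ = H_β D⁻¹(Σ_qq H_β + Σ_pq H_g) + H_g D⁻¹(Σ_pq H_β + Σ_pp H_g). -/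

import Mathlib

open Matrix

theorem stmt1 (N : ℕ) (Hg Hb : Matrix (Fin N) (Fin N) ℝ)
    (hHg : Hg.IsSymm) (hHb : Hb.IsSymm)
    (H : Matrix (Fin N ⊕ Fin N) (Fin N ⊕ Fin N) ℝ)
    (hH : H = Matrix.fromBlocks Hg Hb Hb (-Hg))
    (hHu : IsUnit H)
    (Spp Sqq Spq : Matrix (Fin N) (Fin N) ℝ)
    (hSpp : Spp.IsDiag) (hSqq : Sqq.IsDiag) (hSpq : Spq.IsDiag)
    (d : Fin N → ℝ) (hd : ∀ i, d i = Spp i i * Sqq i i - (Spq i i) ^ 2)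
    (hd0 : ∀ i, d i ≠ 0)
    (D : Matrix (Fin N) (Fin N) ℝ) (hD : D = Matrix.diagonal d)
    (S : Matrix (Fin N ⊕ Fin N) (Fin N ⊕ Fin N) ℝ)
    (hS : S = Matrix.fromBlocks Spp Spq Spq Sqq)
    (Sv : Matrix (Fin N ⊕ Fin N) (Fin N ⊕ Fin N) ℝ)
    (hSv : Sv = H⁻¹ * S * H⁻¹) :
    IsUnit Sv ∧
      Sv⁻¹ = Matrix.fromBlocks
        (Hg * D⁻¹ * (Sqq * Hg - Spq * Hb) - Hb * D⁻¹ * (Spq * Hg - Spp * Hb))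
        (Hg * D⁻¹ * (Sqq * Hb + Spq * Hg) - Hb * D⁻¹ * (Spq * Hb + Spp * Hg))
        (Hb * D⁻¹ * (Sqq * Hg - Spq * Hb) + Hg * D⁻¹ * (Spq * Hg - Spp * Hb))
        (Hb * D⁻¹ * (Sqq * Hb + Spq * Hg) + Hg * D⁻¹ * (Spq * Hb + Spp * Hg)) := by
  set p := Matrix.diag Spp with hp
  set q := Matrix.diag Sqq with hq
  set r := Matrix.diag Spq with hr
  have hSppe : Spp = Matrix.diagonal p := hSpp.diagonal_diag.symm
  have hSqqe : Sqq = Matrix.diagonal q := hSqq.diagonal_diag.symm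
  have hSpqe : Spq = Matrix.diagonal r := hSpq.diagonal_diag.symm
  have hdi : ∀ i, d i = p i * q i - r i ^ 2 := hd
  have hDinv : D⁻¹ = Matrix.diagonal (fun i => (d i)⁻¹) := by
    apply Matrix.inv_eq_right_inv
    rw [hD, Matrix.diagonal_mul_diagonal]
    rw [show (fun i => d i * (d i)⁻¹) = fun _ => (1:ℝ) from funext fun i => mul_inv_cancel₀ (hd0 i)]
    exact Matrix.diagonal_one
  set T : Matrix (Fin N ⊕ Fin N) (Fin N ⊕ Fin N) ℝ :=
    Matrix.fromBlocks (Sqq * D⁻¹) (-(Spq * D⁻¹)) (-(Spq * D⁻¹)) (Spp * D⁻¹) with hT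
  have hST : S * T = 1 := by
    rw [hS, hT, hSppe, hSqqe, hSpqe, hDinv, Matrix.fromBlocks_multiply, ← Matrix.fromBlocks_one]
    have h1 : (1 : Matrix (Fin N) (Fin N) ℝ) = Matrix.diagonal (fun _ => 1) := Matrix.diagonal_one.symm
    have h0 : (0 : Matrix (Fin N) (Fin N) ℝ) = Matrix.diagonal (fun _ => 0) := by simp
    apply Matrix.fromBlocks_inj.mpr
    refine ⟨?_, ?_, ?_, ?_⟩ <;>
    · simp only [Matrix.mul_neg, Matrix.neg_mul, Matrix.diagonal_mul_diagonal,
        Matrix.diagonal_neg, Matrix.diagonal_add, h1, h0, Matrix.diagonal_eq_diagonal_iff]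
      intro i
      first
      | ring1
      | (rw [show (1:ℝ) = d i * (d i)⁻¹ from (mul_inv_cancel₀ (hd0 i)).symm, hdi i]; ring)
  have hHiH : H⁻¹ * H = 1 := Matrix.nonsing_inv_mul H ((Matrix.isUnit_iff_isUnit_det H).mp hHu)
  have key : Sv * (H * T * H) = 1 := by
    rw [hSv]
    have h2 : H⁻¹ * (H * (T * H)) = T * H := by
      rw [← Matrix.mul_assoc, hHiH, Matrix.one_mul]
    simp only [Matrix.mul_assoc]
    rw [h2, ← Matrix.mul_assoc S T H, hST, Matrix.one_mul, hHiH]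
  have hUnit : IsUnit Sv := by
    have hdet : Sv.det * (H * T * H).det = 1 := by
      rw [← Matrix.det_mul, key, Matrix.det_one]
    exact (Matrix.isUnit_iff_isUnit_det Sv).mpr (IsUnit.of_mul_eq_one _ hdet)
  refine ⟨hUnit, ?_⟩
  rw [Matrix.inv_eq_right_inv key, hT, hH, Matrix.fromBlocks_multiply, Matrix.fromBlocks_multiply]
  have dmm : ∀ (a b : Fin N → ℝ) (M : Matrix (Fin N) (Fin N) ℝ),
      Matrix.diagonal a * (Matrix.diagonal b * M) = Matrix.diagonal (fun i => a i * b i) * M := by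
    intro a b M
    rw [← Matrix.mul_assoc, Matrix.diagonal_mul_diagonal]
  have hc : ∀ a : Fin N → ℝ, (fun i => (d i)⁻¹ * a i) = fun i => a i * (d i)⁻¹ :=
    fun a => funext fun i => mul_comm _ _
  apply Matrix.fromBlocks_inj.mpr
  refine ⟨?_, ?_, ?_, ?_⟩ <;>
  · rw [hSppe, hSqqe, hSpqe, hDinv]
    simp only [Matrix.mul_neg, Matrix.neg_mul, Matrix.mul_sub, Matrix.sub_mul,
      Matrix.mul_add, Matrix.add_mul, Matrix.mul_assoc, Matrix.diagonal_mul_diagonal,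
      neg_neg, dmm, hc]
    abel
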